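/- Let H be an m × n matrix over GF(2) of full row rank m, let 0 ≤ τ < 1/2, and let S be uniformly distributed on (ZMod 2)^m. Then the probability that the coset with syndrome S contains a low-weight word satisfies Pr[∃ w ∈ (ZMod 2)^n with Hw = S and wt(w) ≤ τn] ≤ 2^{-(m − n·h_b(τ))}, where h_b(τ) := −τ log₂ τ − (1−τ) log₂(1−τ) is the binary entropy function. (This is the false-acceptance-rate bound P_FA ≤ 2^{-n(m/n − h_b(τ))} for the ECC-based fuzzy commitment and secure sketch systems.) -/

import Mathlib

/-- Probability of the event `P` under the uniform distribution on the finite type `Ω`. -/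
noncomputable def unifProb (Ω : Type*) [Fintype Ω] (P : Ω → Prop) : ℝ :=
  (Nat.card {ω : Ω // P ω} : ℝ) / (Fintype.card Ω : ℝ)

/-- The binary entropy function `h_b(τ) = -τ log₂ τ - (1-τ) log₂ (1-τ)`. -/
noncomputable def binEnt (τ : ℝ) : ℝ :=
  -τ * Real.logb 2 τ - (1 - τ) * Real.logb 2 (1 - τ)

/-- Pointwise key inequality. -/
lemma key_pt (n k : ℕ) (τ : ℝ) (hτ0 : 0 < τ) (hτ : τ < 1 / 2)
    (hk : (k : ℝ) ≤ τ * n) :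
    (2 : ℝ) ^ (-((n : ℝ) * binEnt τ)) ≤ τ ^ (k : ℝ) * (1 - τ) ^ ((n : ℝ) - k) := by
  have hq : (0 : ℝ) < 1 - τ := by linarith
  have hform : ∀ x : ℝ, τ ^ x * (1 - τ) ^ ((n : ℝ) - x)
      = (1 - τ) ^ (n : ℝ) * (τ / (1 - τ)) ^ x := by
    intro x
    rw [Real.div_rpow hτ0.le hq.le, Real.rpow_sub hq]
    ring
  have heq : (2 : ℝ) ^ (-((n : ℝ) * binEnt τ)) = τ ^ (τ * n) * (1 - τ) ^ ((n : ℝ) - τ * n) := by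
    have h1 : τ = (2 : ℝ) ^ Real.logb 2 τ := (Real.rpow_logb (by norm_num) (by norm_num) hτ0).symm
    have h2 : (1 - τ) = (2 : ℝ) ^ Real.logb 2 (1 - τ) :=
      (Real.rpow_logb (by norm_num) (by norm_num) hq).symm
    rw [show τ ^ (τ * (n : ℝ)) = (2 : ℝ) ^ (Real.logb 2 τ * (τ * n)) by
          rw [Real.rpow_mul (by norm_num : (0:ℝ) ≤ 2),
            Real.rpow_logb (by norm_num) (by norm_num) hτ0],
        show (1 - τ) ^ ((n : ℝ) - τ * n) = (2 : ℝ) ^ (Real.logb 2 (1 - τ) * ((n : ℝ) - τ * n)) by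
          rw [Real.rpow_mul (by norm_num : (0:ℝ) ≤ 2),
            Real.rpow_logb (by norm_num) (by norm_num) hq],
        ← Real.rpow_add (by norm_num)]
    congr 1
    simp only [binEnt]
    ring
  rw [heq, hform, hform]
  apply mul_le_mul_of_nonneg_left _ (by positivity)
  exact Real.rpow_le_rpow_of_exponent_ge (by positivity)
    (by rw [div_le_one hq]; linarith) hk

/-- Volume bound for the Hamming ball. -/
lemma sum_choose_le (n : ℕ) (τ : ℝ) (hτ0 : 0 ≤ τ) (hτ : τ < 1 / 2) :
    ∑ k ∈ Finset.range (⌊τ * n⌋₊ + 1), (n.choose k : ℝ) ≤ 2 ^ ((n : ℝ) * binEnt τ) := by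
  rcases eq_or_lt_of_le hτ0 with h0 | hτ0
  · have : τ = 0 := h0.symm
    subst this
    simp [binEnt]
  have hq : (0 : ℝ) < 1 - τ := by linarith
  have hfloor : ∀ k ∈ Finset.range (⌊τ * n⌋₊ + 1), (k : ℝ) ≤ τ * n := by
    intro k hk
    have : k ≤ ⌊τ * n⌋₊ := Nat.lt_succ_iff.mp (Finset.mem_range.mp hk)
    calc (k : ℝ) ≤ (⌊τ * n⌋₊ : ℝ) := by exact_mod_cast this
      _ ≤ τ * n := Nat.floor_le (by positivity)
  have htn : ⌊τ * n⌋₊ + 1 ≤ n + 1 := by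
    have : τ * n ≤ n := by nlinarith [Nat.cast_nonneg (α := ℝ) n]
    have := Nat.floor_le_floor (R := ℝ) this
    simpa using this
  have hbin : ∑ k ∈ Finset.range (n + 1),
      (n.choose k : ℝ) * (τ ^ (k : ℝ) * (1 - τ) ^ ((n : ℝ) - k)) = 1 := by
    have h := add_pow τ (1 - τ) n
    simp only [add_sub_cancel, one_pow] at h
    calc ∑ k ∈ Finset.range (n + 1),
          (n.choose k : ℝ) * (τ ^ (k : ℝ) * (1 - τ) ^ ((n : ℝ) - k))
        = ∑ k ∈ Finset.range (n + 1), τ ^ k * (1 - τ) ^ (n - k) * (n.choose k : ℝ) := by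
          apply Finset.sum_congr rfl
          intro k hk
          have hkn : k ≤ n := Nat.lt_succ_iff.mp (Finset.mem_range.mp hk)
          rw [show ((n : ℝ) - k) = ((n - k : ℕ) : ℝ) by
            rw [Nat.cast_sub hkn], Real.rpow_natCast, Real.rpow_natCast]
          ring
      _ = 1 := h.symm
  have hstep : (∑ k ∈ Finset.range (⌊τ * n⌋₊ + 1), (n.choose k : ℝ))
      * 2 ^ (-((n : ℝ) * binEnt τ)) ≤ 1 := by
    rw [Finset.sum_mul]
    calc ∑ k ∈ Finset.range (⌊τ * n⌋₊ + 1), (n.choose k : ℝ) * 2 ^ (-((n : ℝ) * binEnt τ))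
        ≤ ∑ k ∈ Finset.range (⌊τ * n⌋₊ + 1),
            (n.choose k : ℝ) * (τ ^ (k : ℝ) * (1 - τ) ^ ((n : ℝ) - k)) := by
          apply Finset.sum_le_sum
          intro k hk
          exact mul_le_mul_of_nonneg_left (key_pt n k τ hτ0 hτ (hfloor k hk))
            (by positivity)
      _ ≤ ∑ k ∈ Finset.range (n + 1),
            (n.choose k : ℝ) * (τ ^ (k : ℝ) * (1 - τ) ^ ((n : ℝ) - k)) := by
          apply Finset.sum_le_sum_of_subset_of_nonneg
          · exact Finset.range_subset_range.mpr htn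
          · intro k _ _; positivity
      _ = 1 := hbin
  have h2 : (0 : ℝ) < 2 ^ (-((n : ℝ) * binEnt τ)) := by positivity
  have := (div_le_div_iff_of_pos_right h2).mpr hstep
  rw [mul_div_assoc, div_self h2.ne', mul_one] at this
  calc ∑ k ∈ Finset.range (⌊τ * n⌋₊ + 1), (n.choose k : ℝ)
      ≤ 1 / 2 ^ (-((n : ℝ) * binEnt τ)) := this
    _ = 2 ^ ((n : ℝ) * binEnt τ) := by
        rw [one_div, ← Real.rpow_neg (by norm_num), neg_neg]

theorem stmt_2 (n m : ℕ) (H : Matrix (Fin m) (Fin n) (ZMod 2))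
    (hH : LinearIndependent (ZMod 2) (fun i => H i))
    (τ : ℝ) (hτ0 : 0 ≤ τ) (hτ : τ < 1 / 2) :
    unifProb (Fin m → ZMod 2)
        (fun s => ∃ w : Fin n → ZMod 2, H.mulVec w = s ∧ (hammingNorm w : ℝ) ≤ τ * n)
      ≤ (2 : ℝ) ^ (-((m : ℝ) - n * binEnt τ)) := by
  classical
  set t := ⌊τ * n⌋₊ with ht
  -- Step 1: event count ≤ ball count
  have step1 : Nat.card {s : Fin m → ZMod 2 //
      ∃ w : Fin n → ZMod 2, H.mulVec w = s ∧ (hammingNorm w : ℝ) ≤ τ * n}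
      ≤ Nat.card {w : Fin n → ZMod 2 // (hammingNorm w : ℝ) ≤ τ * n} := by
    apply Nat.card_le_card_of_injective
      (fun s => (⟨s.2.choose, s.2.choose_spec.2⟩ :
        {w : Fin n → ZMod 2 // (hammingNorm w : ℝ) ≤ τ * n}))
    intro s₁ s₂ h
    have h' : s₁.2.choose = s₂.2.choose := congrArg Subtype.val h
    ext1
    rw [← s₁.2.choose_spec.1, ← s₂.2.choose_spec.1, h']
  -- Step 2: ball count ≤ low-card finsets count
  have step2 : Nat.card {w : Fin n → ZMod 2 // (hammingNorm w : ℝ) ≤ τ * n}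
      ≤ Nat.card {A : Finset (Fin n) // A.card ≤ t} := by
    apply Nat.card_le_card_of_injective
      (fun w => (⟨Finset.univ.filter (fun i => w.1 i ≠ 0), by
        have : hammingNorm w.1 ≤ t := Nat.le_floor (by exact_mod_cast w.2)
        simpa [hammingNorm] using this⟩ : {A : Finset (Fin n) // A.card ≤ t}))
    intro w₁ w₂ h
    have h' : Finset.univ.filter (fun i => w₁.1 i ≠ 0)
        = Finset.univ.filter (fun i => w₂.1 i ≠ 0) :=
      congrArg Subtype.val h
    ext1
    funext i
    have hmem : (w₁.1 i ≠ 0) ↔ (w₂.1 i ≠ 0) := by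
      constructor <;> intro hx
      · have : i ∈ Finset.univ.filter (fun i => w₂.1 i ≠ 0) := h' ▸ (by simpa using hx)
        simpa using this
      · have : i ∈ Finset.univ.filter (fun i => w₁.1 i ≠ 0) := h'.symm ▸ (by simpa using hx)
        simpa using this
    have htwo : ∀ x : ZMod 2, x = 0 ∨ x = 1 := by decide
    rcases htwo (w₁.1 i) with h1 | h1 <;> rcases htwo (w₂.1 i) with h2 | h2 <;>
      simp_all
  -- Step 3: count of low-card finsets = sum of binomials
  have step3 : Nat.card {A : Finset (Fin n) // A.card ≤ t}
      = ∑ k ∈ Finset.range (t + 1), n.choose k := by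
    rw [Nat.card_eq_fintype_card, Fintype.card_subtype]
    have hU : (Finset.univ.filter (fun A : Finset (Fin n) => A.card ≤ t))
        = (Finset.range (t + 1)).biUnion
            (fun k => Finset.powersetCard k Finset.univ) := by
      ext A
      simp only [Finset.mem_filter, Finset.mem_univ, true_and, Finset.mem_biUnion,
        Finset.mem_range, Finset.mem_powersetCard, Nat.lt_succ_iff]
      constructor
      · intro hc; exact ⟨A.card, hc, Finset.subset_univ A, rfl⟩
      · rintro ⟨k, hk, -, rfl⟩; exact hk
    rw [hU, Finset.card_biUnion]
    · apply Finset.sum_congr rfl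
      intro k _
      simp [Finset.card_powersetCard]
    · intro a _ b _ hab
      simp only [Finset.disjoint_left]
      intro A hA hB
      exact hab (by
        rw [Finset.mem_powersetCard] at hA hB
        omega)
  -- assemble
  have hcard : (Fintype.card (Fin m → ZMod 2) : ℝ) = 2 ^ (m : ℕ) := by
    simp [Fintype.card_fun]
  have hN : (Nat.card {s : Fin m → ZMod 2 //
      ∃ w : Fin n → ZMod 2, H.mulVec w = s ∧ (hammingNorm w : ℝ) ≤ τ * n} : ℝ)
      ≤ 2 ^ ((n : ℝ) * binEnt τ) := by
    calc (Nat.card {s : Fin m → ZMod 2 //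
        ∃ w : Fin n → ZMod 2, H.mulVec w = s ∧ (hammingNorm w : ℝ) ≤ τ * n} : ℝ)
        ≤ ((∑ k ∈ Finset.range (t + 1), n.choose k : ℕ) : ℝ) := by
          exact_mod_cast le_trans step1 (step3 ▸ step2)
      _ = ∑ k ∈ Finset.range (t + 1), (n.choose k : ℝ) := by push_cast; ring
      _ ≤ 2 ^ ((n : ℝ) * binEnt τ) := sum_choose_le n τ hτ0 hτ
  unfold unifProb
  rw [hcard]
  have h2m : (0 : ℝ) < (2 : ℝ) ^ (m : ℕ) := by positivity
  calc (Nat.card {s : Fin m → ZMod 2 //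
      ∃ w : Fin n → ZMod 2, H.mulVec w = s ∧ (hammingNorm w : ℝ) ≤ τ * n} : ℝ)
        / (2 : ℝ) ^ (m : ℕ)
      ≤ 2 ^ ((n : ℝ) * binEnt τ) / (2 : ℝ) ^ (m : ℕ) := by gcongr
    _ = (2 : ℝ) ^ (-((m : ℝ) - n * binEnt τ)) := by
        rw [← Real.rpow_natCast 2 m, ← Real.rpow_sub (by norm_num)]
        congr 1
        ring
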